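/- arXiv:2302.05793 — 3 statements merged into one kernel-verified Lean document; each statement's English description precedes it below -/
import Mathlib

section
/- Let G = (S, A) be a finite directed acyclic graph with a unique source s₀ and set of sinks X. Let F : T → ℝ≥0 be a nonnegative function on the set T of complete trajectories (directed paths from s₀ to some sink). Define the edge flow F(s→s') = Σ_{τ ∋ (s→s')} F(τ) and the state flow F(s) = Σ_{τ ∋ s} F(τ). Then for every state s' that is neither the source nor a sink, the in-flow equals the out-flow: Σ_{s : (s→s') ∈ A} F(s→s') = Σ_{s'' : (s'→s'') ∈ A} F(s'→s''), and both equal F(s'). -/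
open Finset
open scoped Classical

/-- A sink: a state with no outgoing edge. -/
def IsSink {S : Type*} (A : S → S → Prop) (x : S) : Prop := ∀ y, ¬ A x y

/-- The edge `(s, s')` occurs in the list `l` as a pair of consecutive states. -/
def EdgeIn {S : Type*} (l : List S) (s s' : S) : Prop := (s, s') ∈ l.zip l.tail

/-- A complete trajectory: a nonempty directed path starting at `s₀` and ending at a sink. -/
def CompleteTraj {S : Type*} (A : S → S → Prop) (s₀ : S) (l : List S) : Prop :=
  l ≠ [] ∧ l.head? = some s₀ ∧ l.Chain' A ∧ ∃ x, l.getLast? = some x ∧ IsSink A x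


section FlowMatchingAux
open Relation

lemma edgeIn_cons_cons {S : Type*} {a b : S} {rest : List S} {s s' : S} :
    EdgeIn (a::b::rest) s s' ↔ (s = a ∧ s' = b) ∨ EdgeIn (b::rest) s s' := by
  simp [EdgeIn, Prod.ext_iff]

lemma chain_transGen {S : Type*} {A : S → S → Prop} {a b : S} {l : List S}
    (h : List.Chain A a l) (hb : b ∈ l) : TransGen A a b := by
  induction l generalizing a with
  | nil => simp at hb
  | cons c rest ih =>
    rcases List.chain_cons.1 h with ⟨hac, hc⟩
    rcases List.mem_cons.1 hb with rfl | hb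
    · exact TransGen.single hac
    · exact TransGen.head hac (ih hc hb)

lemma chain'_nodup {S : Type*} {A : S → S → Prop}
    (hacyc : ∀ s : S, ¬ TransGen A s s) {l : List S} (h : List.Chain' A l) :
    l.Nodup := by
  induction l with
  | nil => simp
  | cons a rest ih =>
    have h' : List.Chain A a rest := h
    exact List.nodup_cons.2 ⟨fun hmem => hacyc a (chain_transGen h' hmem), ih h.tail⟩

lemma edgeIn_rel {S : Type*} {A : S → S → Prop} {l : List S} {s s' : S}
    (hc : List.Chain' A l) (he : EdgeIn l s s') : A s s' := by
  induction l with
  | nil => simp [EdgeIn] at he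
  | cons a rest ih =>
    cases rest with
    | nil => simp [EdgeIn] at he
    | cons b rest' =>
      rcases edgeIn_cons_cons.1 he with ⟨rfl, rfl⟩ | he'
      · exact (List.isChain_cons_cons.1 hc).1
      · exact ih (List.isChain_cons_cons.1 hc).2 he'

lemma edgeIn_mem_left {S : Type*} {l : List S} {s s' : S} (he : EdgeIn l s s') : s ∈ l := by
  induction l with
  | nil => simp [EdgeIn] at he
  | cons a rest ih =>
    cases rest with
    | nil => simp [EdgeIn] at he
    | cons b rest' =>
      rcases edgeIn_cons_cons.1 he with ⟨rfl, rfl⟩ | he'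
      · exact List.mem_cons_self
      · exact List.mem_cons_of_mem _ (ih he')

lemma edgeIn_mem_tail {S : Type*} {l : List S} {s s' : S} (he : EdgeIn l s s') : s' ∈ l.tail := by
  induction l with
  | nil => simp [EdgeIn] at he
  | cons a rest ih =>
    cases rest with
    | nil => simp [EdgeIn] at he
    | cons b rest' =>
      rcases edgeIn_cons_cons.1 he with ⟨rfl, rfl⟩ | he'
      · exact List.mem_cons_self
      · exact List.mem_cons_of_mem _ (ih he')

lemma edgeIn_mem_right {S : Type*} {l : List S} {s s' : S} (he : EdgeIn l s s') : s' ∈ l := by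
  cases l with
  | nil => simp [EdgeIn] at he
  | cons a rest => exact List.mem_cons_of_mem _ (edgeIn_mem_tail he)

lemma exists_pred_edge {S : Type*} {a s' : S} {rest : List S} (h : s' ∈ rest) :
    ∃ s, EdgeIn (a :: rest) s s' := by
  induction rest generalizing a with
  | nil => simp at h
  | cons b rest' ih =>
    rcases List.mem_cons.1 h with rfl | h'
    · exact ⟨a, edgeIn_cons_cons.2 (Or.inl ⟨rfl, rfl⟩)⟩
    · obtain ⟨s, hs⟩ := ih (a := b) h'
      exact ⟨s, edgeIn_cons_cons.2 (Or.inr hs)⟩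

lemma exists_succ_edge {S : Type*} {s' x : S} {l : List S} (h : s' ∈ l)
    (hx : l.getLast? = some x) (hne : s' ≠ x) : ∃ t, EdgeIn l s' t := by
  induction l with
  | nil => simp at h
  | cons a rest ih =>
    cases rest with
    | nil =>
      simp at hx h
      exact absurd (h.trans hx) hne
    | cons b rest' =>
      rcases List.mem_cons.1 h with rfl | h'
      · exact ⟨b, edgeIn_cons_cons.2 (Or.inl ⟨rfl, rfl⟩)⟩
      · have hx' : (b :: rest').getLast? = some x := by
          rw [← hx]; simp [List.getLast?_cons_cons]
        obtain ⟨t, ht⟩ := ih h' hx'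
        exact ⟨t, edgeIn_cons_cons.2 (Or.inr ht)⟩

lemma pred_unique {S : Type*} {l : List S} {s t s' : S} (hnd : l.Nodup)
    (h1 : EdgeIn l s s') (h2 : EdgeIn l t s') : s = t := by
  induction l with
  | nil => simp [EdgeIn] at h1
  | cons a rest ih =>
    cases rest with
    | nil => simp [EdgeIn] at h1
    | cons b rest' =>
      have hb : b ∉ rest' := (List.nodup_cons.1 (List.nodup_cons.1 hnd).2).1
      rcases edgeIn_cons_cons.1 h1 with ⟨rfl, rfl⟩ | h1'
      · rcases edgeIn_cons_cons.1 h2 with ⟨rfl, _⟩ | h2'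
        · rfl
        · exact absurd (edgeIn_mem_tail h2') hb
      · rcases edgeIn_cons_cons.1 h2 with ⟨rfl, rfl⟩ | h2'
        · exact absurd (edgeIn_mem_tail h1') hb
        · exact ih (List.nodup_cons.1 hnd).2 h1' h2'

lemma succ_unique {S : Type*} {l : List S} {s' t u : S} (hnd : l.Nodup)
    (h1 : EdgeIn l s' t) (h2 : EdgeIn l s' u) : t = u := by
  induction l with
  | nil => simp [EdgeIn] at h1
  | cons a rest ih =>
    cases rest with
    | nil => simp [EdgeIn] at h1
    | cons b rest' =>
      have ha : a ∉ (b :: rest') := (List.nodup_cons.1 hnd).1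
      rcases edgeIn_cons_cons.1 h1 with ⟨rfl, rfl⟩ | h1'
      · rcases edgeIn_cons_cons.1 h2 with ⟨_, rfl⟩ | h2'
        · rfl
        · exact absurd (edgeIn_mem_left h2') ha
      · rcases edgeIn_cons_cons.1 h2 with ⟨rfl, rfl⟩ | h2'
        · exact absurd (edgeIn_mem_left h1') ha
        · exact ih (List.nodup_cons.1 hnd).2 h1' h2'

end FlowMatchingAux

/-- Flow matching: in a finite DAG with unique source `s₀`, for a nonnegative trajectory
flow `F`, at every state `s'` which is neither the source nor a sink, the in-flow
(sum of edge flows into `s'`) equals the out-flow (sum of edge flows out of `s'`),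
and both equal the state flow `F(s')`. -/
theorem flow_matching {S : Type*} [Fintype S] [DecidableEq S] (A : S → S → Prop)
    (s₀ : S)
    (hacyc : ∀ s : S, ¬ Relation.TransGen A s s)
    (hsource : ∀ y, ¬ A y s₀)
    (huniqsource : ∀ s, (∀ y, ¬ A y s) → s = s₀)
    (T : Finset (List S))
    (hT : ∀ l, l ∈ T ↔ CompleteTraj A s₀ l)
    (F : List S → ℝ) (hF : ∀ τ ∈ T, 0 ≤ F τ)
    (s' : S) (hs' : s' ≠ s₀) (hs'' : ¬ IsSink A s') :
    (∑ s ∈ univ.filter (fun s => A s s'), ∑ τ ∈ T.filter (fun l => EdgeIn l s s'), F τ)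
      = (∑ t ∈ univ.filter (fun t => A s' t), ∑ τ ∈ T.filter (fun l => EdgeIn l s' t), F τ)
    ∧ (∑ s ∈ univ.filter (fun s => A s s'), ∑ τ ∈ T.filter (fun l => EdgeIn l s s'), F τ)
      = ∑ τ ∈ T.filter (fun l => s' ∈ l), F τ := by
  have key_in : ∀ τ ∈ T,
      (∑ s ∈ univ.filter (fun s => A s s'), if EdgeIn τ s s' then F τ else 0)
        = if s' ∈ τ then F τ else 0 := by
    intro τ hτ
    obtain ⟨hne, hhead, hchain, x, hlast, hxsink⟩ := (hT τ).1 hτ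
    have hnd : τ.Nodup := chain'_nodup hacyc hchain
    by_cases hmem : s' ∈ τ
    · simp only [if_pos hmem]
      obtain ⟨a, rest, rfl⟩ := List.exists_cons_of_ne_nil hne
      have ha : a = s₀ := by simpa using hhead
      have hmem' : s' ∈ rest := by
        rcases List.mem_cons.1 hmem with rfl | h
        · exact absurd ha hs'
        · exact h
      obtain ⟨p, hp⟩ := exists_pred_edge (a := a) hmem'
      have hAp : A p s' := edgeIn_rel hchain hp
      rw [Finset.sum_eq_single p]
      · exact if_pos hp
      · intro b hb hbp
        exact if_neg fun he => hbp (pred_unique hnd he hp)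
      · intro hps
        simp only [Finset.mem_filter, Finset.mem_univ, true_and] at hps
        exact absurd hAp hps
    · simp only [if_neg hmem]
      exact Finset.sum_eq_zero fun b hb =>
        if_neg fun he => hmem (edgeIn_mem_right he)
  have key_out : ∀ τ ∈ T,
      (∑ t ∈ univ.filter (fun t => A s' t), if EdgeIn τ s' t then F τ else 0)
        = if s' ∈ τ then F τ else 0 := by
    intro τ hτ
    obtain ⟨hne, hhead, hchain, x, hlast, hxsink⟩ := (hT τ).1 hτ
    have hnd : τ.Nodup := chain'_nodup hacyc hchain
    by_cases hmem : s' ∈ τ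
    · simp only [if_pos hmem]
      have hsx : s' ≠ x := fun h => hs'' (h ▸ hxsink)
      obtain ⟨q, hq⟩ := exists_succ_edge hmem hlast hsx
      have hAq : A s' q := edgeIn_rel hchain hq
      rw [Finset.sum_eq_single q]
      · exact if_pos hq
      · intro b hb hbq
        exact if_neg fun he => hbq (succ_unique hnd he hq)
      · intro hqs
        simp only [Finset.mem_filter, Finset.mem_univ, true_and] at hqs
        exact absurd hAq hqs
    · simp only [if_neg hmem]
      exact Finset.sum_eq_zero fun b hb =>
        if_neg fun he => hmem (edgeIn_mem_left he)
  have ein : (∑ s ∈ univ.filter (fun s => A s s'),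
        ∑ τ ∈ T.filter (fun l => EdgeIn l s s'), F τ)
      = ∑ τ ∈ T, if s' ∈ τ then F τ else 0 := by
    have : ∀ s, (∑ τ ∈ T.filter (fun l => EdgeIn l s s'), F τ)
        = ∑ τ ∈ T, if EdgeIn τ s s' then F τ else 0 := fun s =>
      (Finset.sum_filter _ _)
    rw [Finset.sum_congr rfl fun s _ => this s, Finset.sum_comm]
    exact Finset.sum_congr rfl key_in
  have eout : (∑ t ∈ univ.filter (fun t => A s' t),
        ∑ τ ∈ T.filter (fun l => EdgeIn l s' t), F τ)
      = ∑ τ ∈ T, if s' ∈ τ then F τ else 0 := by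
    have : ∀ t, (∑ τ ∈ T.filter (fun l => EdgeIn l s' t), F τ)
        = ∑ τ ∈ T, if EdgeIn τ s' t then F τ else 0 := fun t =>
      (Finset.sum_filter _ _)
    rw [Finset.sum_congr rfl fun t _ => this t, Finset.sum_comm]
    exact Finset.sum_congr rfl key_out
  have estate : (∑ τ ∈ T.filter (fun l => s' ∈ l), F τ)
      = ∑ τ ∈ T, if s' ∈ τ then F τ else 0 := Finset.sum_filter _ _
  exact ⟨ein.trans eout.symm, ein.trans estate.symm⟩
end

section
/- Let G = (S, A) be a finite DAG with source s₀ and sinks X, with forward policy P_F and backward policy P_B induced by a positive flow F with partition function Z. Then for every complete trajectory τ = (s₀ → s₁ → ... → s_n) with s_n = x ∈ X, the trajectory balance identity holds: Z · Π_{t=0}^{n-1} P_F(s_{t+1}|s_t) = R(x) · Π_{t=0}^{n-1} P_B(s_t|s_{t+1}), where R(x) is the in-flow of x and Z is the out-flow of s₀. -/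
open Finset
open scoped Classical

theorem traj_aux {S : Type*} [Fintype S] [DecidableEq S]
    (A : S → S → Prop) (s₀ : S)
    (hsource : ∀ y, ¬ A y s₀)
    (F : S → S → ℝ)
    (hFpos : ∀ s s', A s s' → 0 < F s s')
    (hflow : ∀ s, s ≠ s₀ → ¬ IsSink A s →
      (∑ p ∈ univ.filter (fun p => A p s), F p s)
        = ∑ c ∈ univ.filter (fun c => A s c), F s c) :
    ∀ (rest : List S) (a b x : S), List.Chain' A (a::b::rest) →
      (a::b::rest).getLast? = some x → IsSink A x →
    (∑ c ∈ univ.filter (fun c => A a c), F a c)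
        * (((a::b::rest).zip (a::b::rest).tail).map
            (fun e => F e.1 e.2 / ∑ c ∈ univ.filter (fun c => A e.1 c), F e.1 c)).prod
      = (∑ p ∈ univ.filter (fun p => A p x), F p x)
        * (((a::b::rest).zip (a::b::rest).tail).map
            (fun e => F e.1 e.2 / ∑ p ∈ univ.filter (fun p => A p e.2), F p e.2)).prod := by
  intro rest
  induction rest with
  | nil =>
    intro a b x hc hl hx
    have hab : A a b := (List.isChain_cons_cons.mp hc).1
    have hxb : x = b := by simpa using hl.symm
    subst hxb
    have hout : 0 < ∑ c ∈ univ.filter (fun c => A a c), F a c :=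
      Finset.sum_pos (fun c hc => hFpos a c (by simpa using hc)) ⟨x, by simp [hab]⟩
    have hin : 0 < ∑ p ∈ univ.filter (fun p => A p x), F p x :=
      Finset.sum_pos (fun p hp => hFpos p x (by simpa using hp)) ⟨a, by simp [hab]⟩
    simp only [List.zip_cons_cons, List.tail, List.zip_nil_right, List.map_cons,
      List.map_nil, List.prod_cons, List.prod_nil, mul_one]
    rw [mul_div_cancel₀ _ (ne_of_gt hout), mul_div_cancel₀ _ (ne_of_gt hin)]
  | cons c rest ih =>
    intro a b x hc hl hx
    have hab : A a b := (List.isChain_cons_cons.mp hc).1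
    have hc' : List.Chain' A (b::c::rest) := (List.isChain_cons_cons.mp hc).2
    have hbc : A b c := (List.isChain_cons_cons.mp hc').1
    have hl' : (b::c::rest).getLast? = some x := by
      simpa [List.getLast?_cons_cons] using hl
    have key := ih b c x hc' hl' hx
    have hb0 : (0:ℝ) < ∑ c' ∈ univ.filter (fun c' => A b c'), F b c' :=
      Finset.sum_pos (fun c' hc' => hFpos b c' (by simpa using hc')) ⟨c, by simp [hbc]⟩
    have ha0 : (0:ℝ) < ∑ c' ∈ univ.filter (fun c' => A a c'), F a c' :=
      Finset.sum_pos (fun c' hc' => hFpos a c' (by simpa using hc')) ⟨b, by simp [hab]⟩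
    have hbs : b ≠ s₀ := fun h => hsource a (h ▸ hab)
    have hbns : ¬ IsSink A b := fun h => h c hbc
    have hfm := hflow b hbs hbns
    simp only [List.zip_cons_cons, List.tail, List.map_cons, List.prod_cons] at key ⊢
    rw [hfm]
    set P := (List.map (fun e => F e.1 e.2 / ∑ c' ∈ univ.filter (fun c' => A e.1 c'), F e.1 c')
      ((c::rest).zip rest)).prod with hPdef
    set Q := (List.map (fun e => F e.1 e.2 / ∑ p ∈ univ.filter (fun p => A p e.2), F p e.2)
      ((c::rest).zip rest)).prod with hQdef
    set Za := ∑ c' ∈ univ.filter (fun c' => A a c'), F a c' with hZa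
    set Zb := ∑ c' ∈ univ.filter (fun c' => A b c'), F b c' with hZb
    set Zc := ∑ p ∈ univ.filter (fun p => A p c), F p c with hZc
    set Zx := ∑ p ∈ univ.filter (fun p => A p x), F p x with hZx
    have hZa0 : Za ≠ 0 := ne_of_gt ha0
    have hZb0 : Zb ≠ 0 := ne_of_gt hb0
    calc Za * (F a b / Za * (F b c / Zb * P))
        = (F a b / Zb) * (Zb * (F b c / Zb * P)) := by field_simp
      _ = (F a b / Zb) * (Zx * (F b c / Zc * Q)) := by rw [key]
      _ = Zx * (F a b / Zb * (F b c / Zc * Q)) := by ring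

/-- Trajectory balance: for a strictly positive edge flow `F` satisfying flow matching,
with forward policy `P_F(s'|s) = F(s→s')/F_out(s)`, backward policy
`P_B(s|s') = F(s→s')/F_in(s')`, partition function `Z = F_out(s₀)` and reward
`R(x) = F_in(x)` at sink `x`, every complete trajectory `l` from `s₀` to `x`
satisfies `Z · ∏ P_F = R(x) · ∏ P_B`. -/
theorem trajectory_balance {S : Type*} [Fintype S] [DecidableEq S]
    (A : S → S → Prop) (s₀ : S)
    (hacyc : ∀ s : S, ¬ Relation.TransGen A s s)
    (hsource : ∀ y, ¬ A y s₀)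
    (huniqsource : ∀ s, (∀ y, ¬ A y s) → s = s₀)
    (F : S → S → ℝ)
    (hFpos : ∀ s s', A s s' → 0 < F s s')
    (hflow : ∀ s, s ≠ s₀ → ¬ IsSink A s →
      (∑ p ∈ univ.filter (fun p => A p s), F p s)
        = ∑ c ∈ univ.filter (fun c => A s c), F s c)
    (l : List S) (x : S)
    (hchain : l.Chain' A) (hhead : l.head? = some s₀)
    (hlast : l.getLast? = some x) (hx : IsSink A x) :
    (∑ c ∈ univ.filter (fun c => A s₀ c), F s₀ c)
        * ((l.zip l.tail).map
            (fun e => F e.1 e.2 / ∑ c ∈ univ.filter (fun c => A e.1 c), F e.1 c)).prod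
      = (∑ p ∈ univ.filter (fun p => A p x), F p x)
        * ((l.zip l.tail).map
            (fun e => F e.1 e.2 / ∑ p ∈ univ.filter (fun p => A p e.2), F p e.2)).prod := by
  match l, hchain, hhead, hlast with
  | [s], hchain, hhead, hlast =>
    have hs : s₀ = s := by simpa using hhead.symm
    have hxs : x = s := by simpa using hlast.symm
    subst hs; subst hxs
    have h1 : univ.filter (fun c => A x c) = ∅ := by
      ext c; simp [hx c]
    have h2 : univ.filter (fun p => A p x) = ∅ := by
      ext p; simp [hsource p]
    simp [h1, h2]
  | a :: b :: rest, hchain, hhead, hlast =>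
    have ha : a = s₀ := by simpa using hhead
    subst ha
    exact traj_aux A a hsource F hFpos hflow rest a b x hchain hlast hx
end

section
/- For a positive random variable R with E[(log R)²] < ∞ that is not almost surely constant, Jensen's inequality gives exp(E[log R]) < E[R]; hence a GFlowNet trained on a stochastic reward via squared log-loss (which samples proportionally to exp(E[log R(x)])) samples with probabilities strictly different from those proportional to the expected reward E[R(x)], whenever at least one reward R(x) is non-degenerate. -/
open MeasureTheory

/-- Strict Jensen inequality for the log: for a positive random variable `R` with
`E[(log R)²] < ∞` that is not almost surely constant,
`exp(E[log R]) < E[R]` (stated with the lower Lebesgue integral on the right so that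
the inequality also covers the case `E[R] = ∞`). This quantifies the bias of training
a GFlowNet with squared log-loss under stochastic rewards: it samples proportionally
to `exp(E[log R(x)])`, which differs from the expected reward `E[R(x)]` whenever the
reward is non-degenerate. -/
theorem exp_expectation_log_lt_expectation {Ω : Type*} [MeasurableSpace Ω]
    (μ : Measure Ω) [IsProbabilityMeasure μ]
    (R : Ω → ℝ) (hRmeas : Measurable R) (hRpos : ∀ ω, 0 < R ω)
    (hlogsq : Integrable (fun ω => (Real.log (R ω)) ^ 2) μ)
    (hnonconst : ¬ ∃ c : ℝ, R =ᵐ[μ] fun _ => c) :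
    ENNReal.ofReal (Real.exp (∫ ω, Real.log (R ω) ∂μ))
      < ∫⁻ ω, ENNReal.ofReal (R ω) ∂μ := by
  set Y : Ω → ℝ := fun ω => Real.log (R ω) with hY
  have hYmeas : Measurable Y := hRmeas.log
  have hYint : Integrable Y μ := by
    refine Integrable.mono' ((hlogsq.add (integrable_const 1)).div_const 2)
      hYmeas.aestronglyMeasurable (Filter.Eventually.of_forall fun ω => ?_)
    simp only [Pi.add_apply]
    rw [Real.norm_eq_abs, abs_le]
    constructor <;> nlinarith [sq_nonneg (Y ω - 1), sq_nonneg (Y ω + 1)]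
  have hRY : ∀ ω, R ω = Real.exp (Y ω) := fun ω => (Real.exp_log (hRpos ω)).symm
  by_cases hRint : Integrable R μ
  · have hJ := strictConvexOn_exp.ae_eq_const_or_map_average_lt
      Real.continuous_exp.continuousOn isClosed_univ
      (Filter.Eventually.of_forall fun ω => Set.mem_univ (Y ω)) hYint ?_
    · rcases hJ with hconst | hlt
      · exfalso
        apply hnonconst
        refine ⟨Real.exp (⨍ ω, Y ω ∂μ), ?_⟩
        filter_upwards [hconst] with ω hω
        simp [hRY ω, Function.const] at hω ⊢
        rw [hω]
      · rw [average_eq_integral, average_eq_integral] at hlt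
        have hRnn : 0 ≤ᵐ[μ] R := Filter.Eventually.of_forall fun ω => (hRpos ω).le
        rw [← ofReal_integral_eq_lintegral_ofReal hRint hRnn]
        simp only [← hRY] at hlt
        exact (ENNReal.ofReal_lt_ofReal_iff_of_nonneg (Real.exp_pos _).le).2 hlt
    · have he : Real.exp ∘ Y = R := funext fun ω => (hRY ω).symm
      rw [he]; exact hRint
  · have : ∫⁻ ω, ENNReal.ofReal (R ω) ∂μ = ⊤ := by
      by_contra h
      exact hRint ⟨hRmeas.aestronglyMeasurable,
        (hasFiniteIntegral_iff_ofReal (Filter.Eventually.of_forall fun ω => (hRpos ω).le)).2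
          (lt_top_iff_ne_top.2 h)⟩
    rw [this]; exact ENNReal.ofReal_lt_top
end
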